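/- For every natural numbers A ≥ 1, B ≥ 1 and N ≥ 2, the power sums satisfy ∑_{j=1}^{N-1} j^{A·λ(N)} ≡ ∑_{j=1}^{N-1} j^{B·φ(N)} (mod N), where λ is the Carmichael function and φ is Euler's totient function. -/

import Mathlib

open Finset

/-- The Carmichael function: exponent of the unit group of `ZMod n`. -/
noncomputable def carmichael (n : ℕ) : ℕ := Monoid.exponent (ZMod n)ˣ

/-- `n` is composite. -/
def Composite (n : ℕ) : Prop := 2 ≤ n ∧ ¬ n.Prime

/-- `n` is a Giuga number. -/
def IsGiuga (n : ℕ) : Prop :=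
  Composite n ∧ ∀ p : ℕ, p.Prime → p ∣ n → p ∣ (n / p - 1)

lemma carmichael_dvd_of_dvd {d n : ℕ} [NeZero n] (h : d ∣ n) :
    carmichael d ∣ carmichael n :=
  MonoidHom.exponent_dvd (ZMod.unitsMap_surjective h)

lemma pow_eq_one_of_isUnit {n e : ℕ} {x : ZMod n} (hx : IsUnit x)
    (he : carmichael n ∣ e) : x ^ e = 1 := by
  obtain ⟨u, rfl⟩ := hx
  obtain ⟨c, rfl⟩ := he
  have h1 : u ^ carmichael n = 1 := Monoid.pow_exponent_eq_one u
  rw [← Units.val_pow_eq_pow_val, pow_mul, h1, one_pow, Units.val_one]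

lemma two_dvd_carmichael {n : ℕ} (hn : 2 < n) : 2 ∣ carmichael n := by
  haveI : NeZero n := ⟨by omega⟩
  haveI : Fact (2 < n) := ⟨hn⟩
  have hne : (-1 : (ZMod n)ˣ) ≠ 1 := by
    intro h
    exact ZMod.neg_one_ne_one (by simpa using congrArg Units.val h)
  have h2 : orderOf (-1 : (ZMod n)ˣ) = 2 :=
    orderOf_eq_prime (by simp) hne
  exact h2 ▸ Monoid.order_dvd_exponent (-1 : (ZMod n)ˣ)

lemma cast_sum_range_mul (m c t : ℕ) :
    ((∑ j ∈ Finset.range (m * t), j ^ c : ℕ) : ZMod m)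
      = (t : ZMod m) * ((∑ j ∈ Finset.range m, j ^ c : ℕ) : ZMod m) := by
  induction t with
  | zero => simp
  | succ t ih =>
    rw [Nat.mul_succ, Finset.sum_range_add, Nat.cast_add, ih]
    have h2 : ((∑ i ∈ Finset.range m, (m * t + i) ^ c : ℕ) : ZMod m)
        = ((∑ j ∈ Finset.range m, j ^ c : ℕ) : ZMod m) := by
      push_cast
      refine Finset.sum_congr rfl fun i _ => ?_
      congr 1
      simp [ZMod.natCast_self]
    rw [h2]
    push_cast
    ring

lemma sum_pow_prime_pow {p : ℕ} (hp : p.Prime) (k e : ℕ) (he : 1 ≤ e)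
    (hd : carmichael (p ^ k) ∣ e) :
    ((∑ j ∈ Finset.range (p ^ k), j ^ e : ℕ) : ZMod (p ^ k))
      = (Nat.totient (p ^ k) : ZMod (p ^ k)) := by
  induction k with
  | zero => rw [pow_zero]; exact Subsingleton.elim _ _
  | succ k ih =>
    haveI hq : NeZero (p ^ (k + 1)) := ⟨pow_ne_zero _ hp.pos.ne'⟩
    have hdk : carmichael (p ^ k) ∣ e :=
      dvd_trans (carmichael_dvd_of_dvd (pow_dvd_pow p k.le_succ)) hd
    rw [← Finset.sum_filter_add_sum_filter_not (Finset.range (p ^ (k+1))) (fun j => p ∣ j),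
      Nat.cast_add]
    have himg : (Finset.range (p ^ (k+1))).filter (fun j => p ∣ j)
        = (Finset.range (p ^ k)).image (fun m => p * m) := by
      ext j
      simp only [Finset.mem_filter, Finset.mem_range, Finset.mem_image]
      constructor
      · rintro ⟨hjlt, m, rfl⟩
        refine ⟨m, ?_, rfl⟩
        rw [pow_succ'] at hjlt
        exact Nat.lt_of_mul_lt_mul_left hjlt
      · rintro ⟨m, hm, rfl⟩
        refine ⟨?_, Dvd.intro m rfl⟩
        rw [pow_succ']
        exact mul_lt_mul_of_pos_left hm hp.pos
    have hdvd : (p ^ (k+1)) ∣ ∑ m ∈ Finset.range (p ^ k), (p * m) ^ e := by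
      rcases Nat.eq_zero_or_pos k with hk0 | hk0
      · subst hk0
        simp [zero_pow (by omega : e ≠ 0)]
      · have he2 : 2 ≤ e := by
          have h2 : 2 ∣ e := dvd_trans (two_dvd_carmichael (by
            calc (2 : ℕ) < 2 ^ 2 := by norm_num
            _ ≤ p ^ 2 := Nat.pow_le_pow_left hp.two_le 2
            _ ≤ p ^ (k+1) := Nat.pow_le_pow_right hp.pos (by omega))) hd
          omega
        set W : ℕ := ∑ m ∈ Finset.range (p ^ k), m ^ e with hW
        have hmodeq : W ≡ Nat.totient (p ^ k) [MOD p ^ k] :=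
          (ZMod.natCast_eq_natCast_iff _ _ _).mp (ih hdk)
        have hdvdW : p ^ (k - 1) ∣ W := by
          have h1 : W ≡ Nat.totient (p ^ k) [MOD p ^ (k-1)] :=
            hmodeq.of_dvd (pow_dvd_pow p (Nat.sub_le k 1))
          have h2 : p ^ (k - 1) ∣ Nat.totient (p ^ k) := by
            rw [Nat.totient_prime_pow hp hk0]
            exact Dvd.intro _ rfl
          exact (Nat.modEq_zero_iff_dvd).mp (h1.trans (Nat.modEq_zero_iff_dvd.mpr h2))
        have hsum : ∑ m ∈ Finset.range (p ^ k), (p * m) ^ e = p ^ e * W := by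
          rw [hW, Finset.mul_sum]
          exact Finset.sum_congr rfl fun m _ => by rw [mul_pow]
        rw [hsum]
        obtain ⟨w, hw⟩ := hdvdW
        rw [hw, ← mul_assoc, ← pow_add]
        exact Dvd.dvd.mul_right (pow_dvd_pow p (by omega)) w
    have hzero : ((∑ j ∈ (Finset.range (p ^ (k+1))).filter (fun j => p ∣ j),
        j ^ e : ℕ) : ZMod (p ^ (k+1))) = 0 := by
      rw [himg, Finset.sum_image (fun a _ b _ h => Nat.eq_of_mul_eq_mul_left hp.pos h)]
      exact (ZMod.natCast_eq_zero_iff _ _).mpr hdvd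
    have hunits : ((∑ j ∈ (Finset.range (p ^ (k+1))).filter (fun j => ¬ p ∣ j),
        j ^ e : ℕ) : ZMod (p ^ (k+1)))
        = (Nat.totient (p ^ (k+1)) : ZMod (p ^ (k+1))) := by
      push_cast
      rw [Finset.sum_congr rfl (fun j hj => ?_), Finset.sum_const, nsmul_eq_mul, mul_one]
      · congr 1
        rw [Nat.totient]
        congr 1
        apply Finset.filter_congr
        intro j _
        rw [Nat.coprime_comm, Nat.coprime_pow_right_iff (Nat.succ_pos k),
          Nat.coprime_comm, hp.coprime_iff_not_dvd]
      · apply pow_eq_one_of_isUnit _ hd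
        rw [ZMod.isUnit_iff_coprime]
        have hj' := Finset.mem_filter.mp hj
        rw [Nat.coprime_pow_right_iff (Nat.succ_pos k)]
        exact Nat.coprime_comm.mp ((hp.coprime_iff_not_dvd).mpr hj'.2)
    rw [hzero, hunits, zero_add]

lemma sum_pow_eq_sum_pow (N : ℕ) : N ≠ 0 → ∀ a b : ℕ, 1 ≤ a → 1 ≤ b →
    carmichael N ∣ a → carmichael N ∣ b →
    ((∑ j ∈ Finset.range N, j ^ a : ℕ) : ZMod N)
      = ((∑ j ∈ Finset.range N, j ^ b : ℕ) : ZMod N) := by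
  induction N using Nat.recOnPosPrimePosCoprime with
  | prime_pow p k hp hk =>
    intro _ a b ha hb hda hdb
    rw [sum_pow_prime_pow hp k a ha hda,
      sum_pow_prime_pow hp k b hb hdb]
  | zero => intro h; exact absurd rfl h
  | one => intro _ a b _ _ _ _; exact Subsingleton.elim _ _
  | coprime m n hm hn hmn ihm ihn =>
    intro _ a b ha hb hda hdb
    haveI : NeZero m := ⟨by omega⟩
    haveI : NeZero n := ⟨by omega⟩
    haveI : NeZero (m * n) := ⟨by positivity⟩
    have hdm : carmichael m ∣ carmichael (m * n) := carmichael_dvd_of_dvd ⟨n, rfl⟩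
    have hdn : carmichael n ∣ carmichael (m * n) := carmichael_dvd_of_dvd ⟨m, mul_comm m n⟩
    have hSm := ihm (by omega) a b ha hb (hdm.trans hda) (hdm.trans hdb)
    have hSn := ihn (by omega) a b ha hb (hdn.trans hda) (hdn.trans hdb)
    apply (ZMod.chineseRemainder hmn).injective
    rw [map_natCast, map_natCast]
    rw [Prod.ext_iff]
    constructor
    · rw [Prod.fst_natCast, Prod.fst_natCast, cast_sum_range_mul m a n,
        cast_sum_range_mul m b n, hSm]
    · rw [Prod.snd_natCast, Prod.snd_natCast, mul_comm m n, cast_sum_range_mul n a m,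
        cast_sum_range_mul n b m, hSn]

theorem powerSum_carmichael_eq_powerSum_totient
    (A B N : ℕ) (hA : 1 ≤ A) (hB : 1 ≤ B) (hN : 2 ≤ N) :
    ∑ j ∈ Finset.Ico 1 N, (j : ZMod N) ^ (A * carmichael N) =
      ∑ j ∈ Finset.Ico 1 N, (j : ZMod N) ^ (B * Nat.totient N) := by
  haveI : NeZero N := ⟨by omega⟩
  have hcar : 0 < carmichael N := Nat.pos_of_ne_zero Monoid.exponent_ne_zero_of_finite
  have htot : 0 < Nat.totient N := Nat.totient_pos.mpr (by omega)
  have hdvd_tot : carmichael N ∣ N.totient := by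
    rw [← ZMod.card_units_eq_totient N]
    exact Group.exponent_dvd_card
  have key : ∀ e : ℕ, 1 ≤ e →
      (∑ j ∈ Finset.Ico 1 N, (j : ZMod N) ^ e)
        = ((∑ j ∈ Finset.range N, j ^ e : ℕ) : ZMod N) := by
    intro e he
    rw [Finset.range_eq_Ico, Finset.sum_eq_sum_Ico_succ_bot (by omega : 0 < N)]
    rw [zero_pow (by omega : e ≠ 0), zero_add]
    push_cast
    rfl
  rw [key _ (Nat.mul_pos hA hcar), key _ (Nat.mul_pos hB htot)]
  exact sum_pow_eq_sum_pow N (by omega) _ _ (Nat.mul_pos hA hcar) (Nat.mul_pos hB htot)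
    (dvd_mul_left _ _) (hdvd_tot.mul_left B)
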